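/- Let w, w̃ be prime binary words of lengths d, d̃ and φ, φ̃ ∈ S¹. If there is a unitary U : ℂ^d → ℂ^{d̃} with U(A_w D_φ) = (A_{w̃} D_{φ̃})U and U(B_w D_φ) = (B_{w̃} D_{φ̃})U, then d = d̃, w̃ is a cyclic permutation of w, and φ = φ̃. -/

import Mathlib

open Filter Topology
open scoped InnerProductSpace

/-- The partial shift matrix `A_w`: `A_w e_n = e_{n+1 mod d}` if the `n`-th digit of
`w` is `0` (i.e. `false`), else `A_w e_n = 0`. -/
def Aw (d : ℕ) (w : Fin d → Bool) : Matrix (Fin d) (Fin d) ℂ :=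
  fun i j => if w j = false ∧ (i : ℕ) = ((j : ℕ) + 1) % d then 1 else 0

/-- The partial shift matrix `B_w`: `B_w e_n = e_{n+1 mod d}` if the `n`-th digit of
`w` is `1` (i.e. `true`), else `B_w e_n = 0`. -/
def Bw (d : ℕ) (w : Fin d → Bool) : Matrix (Fin d) (Fin d) ℂ :=
  fun i j => if w j = true ∧ (i : ℕ) = ((j : ℕ) + 1) % d then 1 else 0

/-- The diagonal matrix `diag(1, …, 1, φ)`. -/
def Dmat (d : ℕ) (φ : ℂ) : Matrix (Fin d) (Fin d) ℂ :=
  Matrix.diagonal fun i => if (i : ℕ) = d - 1 then φ else 1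

/-- A binary word `w` of length `d` is prime iff it is not a proper power, i.e. it is
not invariant under the cyclic shift by `k` for any proper divisor `k` of `d`. -/
def IsPrimeWord (d : ℕ) (w : Fin d → Bool) : Prop :=
  ∀ k : ℕ, 0 < k → k < d → k ∣ d →
    ¬ ∀ i : Fin d, w ⟨((i : ℕ) + k) % d, Nat.mod_lt _ i.pos⟩ = w i

/-- The periodic ray `w^∞` obtained by repeating the word `w` of length `d`. -/
def rayOfWord (d : ℕ) (hd : 0 < d) (w : Fin d → Bool) : ℕ → Bool :=
  fun n => w ⟨n % d, Nat.mod_lt _ hd⟩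

/-- Action of a finite binary word on `ℂ^d` via the matrices `A` (digit `false`) and
`B` (digit `true`), the first digit acting first. -/
noncomputable def matAct {d : ℕ} (A B : Matrix (Fin d) (Fin d) ℂ) :
    List Bool → EuclideanSpace ℂ (Fin d) → EuclideanSpace ℂ (Fin d)
  | [], ξ => ξ
  | b :: rest, ξ => matAct A B rest (Matrix.toEuclideanLin (if b then B else A) ξ)

/-- The length-`n` prefix of a ray `p : ℕ → Bool` as a list. -/
def pre (p : ℕ → Bool) (n : ℕ) : List Bool := List.ofFn fun i : Fin n => p i

/-! ### Auxiliary lemmas -/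

lemma single_smul' (d : ℕ) (k : Fin d) (c : ℂ) :
    c • EuclideanSpace.single k (1:ℂ) = EuclideanSpace.single k c := by
  ext i; simp [EuclideanSpace.single_apply, mul_ite]

lemma single_ne_zero' (d : ℕ) (k : Fin d) : EuclideanSpace.single k (1:ℂ) ≠ 0 := by
  intro h
  have := congrArg (fun v : EuclideanSpace ℂ (Fin d) => v k) h
  simp [EuclideanSpace.single_apply] at this

/-- One step of the action on a basis vector. -/
lemma step (d : ℕ) (hd : 0 < d) (w : Fin d → Bool) (φ : ℂ) (b : Bool) (j : Fin d) :
    Matrix.toEuclideanLin ((if b then Bw d w else Aw d w) * Dmat d φ)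
        (EuclideanSpace.single j 1) =
      if w j = b then (if (j : ℕ) = d - 1 then φ else 1) •
        EuclideanSpace.single (⟨((j : ℕ) + 1) % d, Nat.mod_lt _ hd⟩ : Fin d) 1
      else 0 := by
  have h1 : EuclideanSpace.single j (1:ℂ) = (WithLp.equiv 2 (Fin d → ℂ)).symm (Pi.single j 1) :=
    rfl
  rw [h1, WithLp.equiv_symm_apply, Matrix.toEuclideanLin_apply_piLp_toLp, Matrix.mulVec_single]
  rcases hb : b with _ | _ <;> rcases hwj : w j with _ | _ <;>
      simp only [if_true, if_false, Bool.true_eq_false, Bool.false_eq_true, single_smul'] <;>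
    · ext i
      simp [Aw, Bw, Dmat, Matrix.mul_diagonal, EuclideanSpace.single_apply,
        PiLp.toLp_apply, hwj, Fin.ext_iff, ite_mul, mul_ite] <;>
        split_ifs <;> rfl

lemma single_congr (d : ℕ) (k k' : Fin d) (h : (k : ℕ) = (k' : ℕ)) :
    EuclideanSpace.single k (1:ℂ) = EuclideanSpace.single k' 1 := by
  rw [Fin.ext h]

/-- Version of `step` matching the `if` shape appearing in `matAct`. -/
lemma step' (d : ℕ) (hd : 0 < d) (w : Fin d → Bool) (φ : ℂ) (b : Bool) (j : Fin d) :
    Matrix.toEuclideanLin (if b then Bw d w * Dmat d φ else Aw d w * Dmat d φ)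
        (EuclideanSpace.single j 1) =
      if w j = b then (if (j : ℕ) = d - 1 then φ else 1) •
        EuclideanSpace.single (⟨((j : ℕ) + 1) % d, Nat.mod_lt _ hd⟩ : Fin d) 1
      else 0 := by
  have hmm : (if b then Bw d w * Dmat d φ else Aw d w * Dmat d φ)
      = (if b then Bw d w else Aw d w) * Dmat d φ := by cases b <;> simp
  rw [hmm]; exact step d hd w φ b j

/-- `matAct` as a linear map. -/
noncomputable def matActL {d : ℕ} (A B : Matrix (Fin d) (Fin d) ℂ) :
    List Bool → (EuclideanSpace ℂ (Fin d) →ₗ[ℂ] EuclideanSpace ℂ (Fin d))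
  | [] => LinearMap.id
  | b :: rest => (matActL A B rest) ∘ₗ (Matrix.toEuclideanLin (if b then B else A))

lemma matAct_eq_matActL {d : ℕ} (A B : Matrix (Fin d) (Fin d) ℂ) (l : List Bool)
    (x : EuclideanSpace ℂ (Fin d)) : matAct A B l x = matActL A B l x := by
  induction l generalizing x with
  | nil => rfl
  | cons b rest ih => simp [matAct, matActL, ih]

lemma matAct_zero {d : ℕ} (A B : Matrix (Fin d) (Fin d) ℂ) (l : List Bool) :
    matAct A B l 0 = 0 := by
  rw [matAct_eq_matActL]; exact map_zero _

lemma matAct_smul {d : ℕ} (A B : Matrix (Fin d) (Fin d) ℂ) (l : List Bool) (c : ℂ)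
    (x : EuclideanSpace ℂ (Fin d)) : matAct A B l (c • x) = c • matAct A B l x := by
  rw [matAct_eq_matActL, matAct_eq_matActL]; exact map_smul _ c x

/-- Positive direction: if the word matches, the basis vector survives. -/
lemma matAct_single_of_match (d : ℕ) (hd : 0 < d) (w : Fin d → Bool) (φ : ℂ) (hφ0 : φ ≠ 0) :
    ∀ (l : List Bool) (j : Fin d),
      (∀ (t : ℕ) (ht : t < l.length),
        w ⟨((j : ℕ) + t) % d, Nat.mod_lt _ hd⟩ = l.get ⟨t, ht⟩) →
      ∃ c : ℂ, c ≠ 0 ∧ matAct (Aw d w * Dmat d φ) (Bw d w * Dmat d φ) l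
          (EuclideanSpace.single j 1) =
        c • EuclideanSpace.single (⟨((j : ℕ) + l.length) % d, Nat.mod_lt _ hd⟩ : Fin d) 1 := by
  intro l
  induction l with
  | nil =>
    intro j _
    refine ⟨1, one_ne_zero, ?_⟩
    rw [one_smul]
    show EuclideanSpace.single j 1 = _
    exact single_congr d _ _ (by simp [Nat.mod_eq_of_lt j.isLt])
  | cons b rest ih =>
    intro j hmatch
    have h0 : w j = b := by
      have := hmatch 0 (by simp)
      simpa [Nat.mod_eq_of_lt j.isLt] using this
    set j1 : Fin d := ⟨((j : ℕ) + 1) % d, Nat.mod_lt _ hd⟩ with hj1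
    have hstep := step' d hd w φ b j
    rw [if_pos h0] at hstep
    have hmatch' : ∀ (t : ℕ) (ht : t < rest.length),
        w ⟨((j1 : ℕ) + t) % d, Nat.mod_lt _ hd⟩ = rest.get ⟨t, ht⟩ := by
      intro t ht
      have h1 := hmatch (t + 1) (by simpa using Nat.succ_lt_succ ht)
      have heq : (⟨((j1 : ℕ) + t) % d, Nat.mod_lt _ hd⟩ : Fin d)
          = ⟨((j : ℕ) + (t + 1)) % d, Nat.mod_lt _ hd⟩ := by
        apply Fin.ext
        show (((j : ℕ) + 1) % d + t) % d = ((j : ℕ) + (t + 1)) % d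
        rw [Nat.mod_add_mod]; congr 1; omega
      rw [heq, h1]
      rfl
    obtain ⟨c, hc, hEq⟩ := ih j1 hmatch'
    refine ⟨(if (j : ℕ) = d - 1 then φ else 1) * c, ?_, ?_⟩
    · apply mul_ne_zero _ hc
      split_ifs <;> simp [hφ0]
    · have hunfold : matAct (Aw d w * Dmat d φ) (Bw d w * Dmat d φ) (b :: rest)
          (EuclideanSpace.single j 1)
          = matAct (Aw d w * Dmat d φ) (Bw d w * Dmat d φ) rest
            (Matrix.toEuclideanLin (if b then Bw d w * Dmat d φ else Aw d w * Dmat d φ)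
              (EuclideanSpace.single j 1)) := rfl
      rw [hunfold, hstep, matAct_smul, hEq, smul_smul]
      congr 1
      apply single_congr
      show ((j1 : ℕ) + rest.length) % d = ((j : ℕ) + (b :: rest).length) % d
      simp only [hj1, List.length_cons]
      rw [Nat.mod_add_mod]; congr 1; omega

/-- Negative direction: if the basis vector survives, the word matches. -/
lemma match_of_matAct_single_ne (d : ℕ) (hd : 0 < d) (w : Fin d → Bool) (φ : ℂ) :
    ∀ (l : List Bool) (j : Fin d),
      matAct (Aw d w * Dmat d φ) (Bw d w * Dmat d φ) l (EuclideanSpace.single j 1) ≠ 0 →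
      ∀ (t : ℕ) (ht : t < l.length),
        w ⟨((j : ℕ) + t) % d, Nat.mod_lt _ hd⟩ = l.get ⟨t, ht⟩ := by
  intro l
  induction l with
  | nil => intro j _ t ht; simp at ht
  | cons b rest ih =>
    intro j hne
    have hunfold : matAct (Aw d w * Dmat d φ) (Bw d w * Dmat d φ) (b :: rest)
        (EuclideanSpace.single j 1)
        = matAct (Aw d w * Dmat d φ) (Bw d w * Dmat d φ) rest
          (Matrix.toEuclideanLin (if b then Bw d w * Dmat d φ else Aw d w * Dmat d φ)
            (EuclideanSpace.single j 1)) := rfl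
    have hstep := step' d hd w φ b j
    by_cases h0 : w j = b
    · rw [if_pos h0] at hstep
      set j1 : Fin d := ⟨((j : ℕ) + 1) % d, Nat.mod_lt _ hd⟩ with hj1
      have hne' : matAct (Aw d w * Dmat d φ) (Bw d w * Dmat d φ) rest
          (EuclideanSpace.single j1 1) ≠ 0 := by
        intro h
        apply hne
        rw [hunfold, hstep, matAct_smul, h, smul_zero]
      have hrest := ih j1 hne'
      intro t ht
      match t with
      | 0 =>
        have heq : (⟨((j : ℕ) + 0) % d, Nat.mod_lt _ hd⟩ : Fin d) = j := by
          apply Fin.ext; simp [Nat.mod_eq_of_lt j.isLt]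
        rw [heq]; exact h0
      | (s + 1) =>
        have hs : s < rest.length := by simpa using Nat.lt_of_succ_lt_succ ht
        have h1 := hrest s hs
        have heq : (⟨((j : ℕ) + (s + 1)) % d, Nat.mod_lt _ hd⟩ : Fin d)
            = ⟨((j1 : ℕ) + s) % d, Nat.mod_lt _ hd⟩ := by
          apply Fin.ext
          show ((j : ℕ) + (s + 1)) % d = (((j : ℕ) + 1) % d + s) % d
          rw [Nat.mod_add_mod]; congr 1; omega
        rw [heq, h1]
        rfl
    · exfalso
      apply hne
      rw [hunfold, hstep, if_neg h0, matAct_zero]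

/-- Iterating the full (cyclic-shift) map along a stretch with no wrap. -/
lemma cycle_pow_aux (d : ℕ) (hd : 0 < d)
    (f : EuclideanSpace ℂ (Fin d) →ₗ[ℂ] EuclideanSpace ℂ (Fin d)) (φ : ℂ)
    (hf : ∀ j : Fin d, f (EuclideanSpace.single j 1) =
      (if (j : ℕ) = d - 1 then φ else 1) •
        EuclideanSpace.single (⟨((j : ℕ) + 1) % d, Nat.mod_lt _ hd⟩ : Fin d) 1) :
    ∀ (n : ℕ) (j : Fin d) (h : (j : ℕ) + n < d),
      f^[n] (EuclideanSpace.single j 1) = EuclideanSpace.single (⟨(j : ℕ) + n, h⟩ : Fin d) 1 := by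
  intro n
  induction n with
  | zero =>
    intro j h
    exact single_congr d j _ (by simp)
  | succ n ih =>
    intro j h
    rw [Function.iterate_succ_apply]
    have hj : ¬ ((j : ℕ) = d - 1) := by omega
    have hj1 : ((j : ℕ) + 1) % d = (j : ℕ) + 1 := Nat.mod_eq_of_lt (by omega)
    rw [hf j, if_neg hj, one_smul]
    have h' : (((⟨((j : ℕ) + 1) % d, Nat.mod_lt _ hd⟩ : Fin d)) : ℕ) + n < d := by
      simp only [hj1]; omega
    rw [ih _ h']
    apply single_congr
    show ((j : ℕ) + 1) % d + n = (j : ℕ) + (n + 1)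
    rw [hj1]; omega

lemma cycle_pow (d : ℕ) (hd : 0 < d)
    (f : EuclideanSpace ℂ (Fin d) →ₗ[ℂ] EuclideanSpace ℂ (Fin d)) (φ : ℂ)
    (hf : ∀ j : Fin d, f (EuclideanSpace.single j 1) =
      (if (j : ℕ) = d - 1 then φ else 1) •
        EuclideanSpace.single (⟨((j : ℕ) + 1) % d, Nat.mod_lt _ hd⟩ : Fin d) 1) :
    ∀ j : Fin d, f^[d] (EuclideanSpace.single j 1) = φ • EuclideanSpace.single j 1 := by
  intro j
  have hsplit : d = (j : ℕ) + (1 + (d - 1 - (j : ℕ))) := by omega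
  rw [show f^[d] (EuclideanSpace.single j 1)
      = f^[(j : ℕ) + (1 + (d - 1 - (j : ℕ)))] (EuclideanSpace.single j 1) by rw [← hsplit]]
  rw [Function.iterate_add_apply, Function.iterate_add_apply, Function.iterate_one]
  have h1 : (j : ℕ) + (d - 1 - (j : ℕ)) < d := by omega
  rw [cycle_pow_aux d hd f φ hf _ j h1]
  have htop : ((⟨(j : ℕ) + (d - 1 - (j : ℕ)), h1⟩ : Fin d) : ℕ) = d - 1 := by
    show (j : ℕ) + (d - 1 - (j : ℕ)) = d - 1
    omega
  rw [hf, if_pos htop]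
  have h0 : ((((⟨(j : ℕ) + (d - 1 - (j : ℕ)), h1⟩ : Fin d) : ℕ) + 1) % d) = 0 := by
    rw [htop]
    have hdd : d - 1 + 1 = d := by omega
    rw [hdd, Nat.mod_self]
  have heq0 : (⟨(((⟨(j : ℕ) + (d - 1 - (j : ℕ)), h1⟩ : Fin d) : ℕ) + 1) % d,
      Nat.mod_lt _ hd⟩ : Fin d) = ⟨0, hd⟩ := Fin.ext h0
  rw [heq0]
  have hsm : ∀ (k : ℕ) (x : EuclideanSpace ℂ (Fin d)), f^[k] (φ • x) = φ • f^[k] x := by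
    intro k
    induction k with
    | zero => intro x; rfl
    | succ k ihk =>
      intro x
      rw [Function.iterate_succ_apply, map_smul, ihk, Function.iterate_succ_apply]
  rw [hsm]
  have h2 : (((⟨0, hd⟩ : Fin d)) : ℕ) + (j : ℕ) < d := by simpa using j.isLt
  rw [cycle_pow_aux d hd f φ hf _ ⟨0, hd⟩ h2]
  congr 1
  exact single_congr d _ _ (by simp)

theorem stmt14 (d d' : ℕ) (hd : 0 < d) (hd' : 0 < d')
    (w : Fin d → Bool) (w' : Fin d' → Bool)
    (hw : IsPrimeWord d w) (hw' : IsPrimeWord d' w')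
    (φ φ' : ℂ) (hφ : ‖φ‖ = 1) (hφ' : ‖φ'‖ = 1)
    (U : EuclideanSpace ℂ (Fin d) ≃ₗᵢ[ℂ] EuclideanSpace ℂ (Fin d'))
    (hUA : ∀ x, U (Matrix.toEuclideanLin (Aw d w * Dmat d φ) x) =
      Matrix.toEuclideanLin (Aw d' w' * Dmat d' φ') (U x))
    (hUB : ∀ x, U (Matrix.toEuclideanLin (Bw d w * Dmat d φ) x) =
      Matrix.toEuclideanLin (Bw d' w' * Dmat d' φ') (U x)) :
    d = d' ∧ φ = φ' ∧
      ∃ u v : List Bool, List.ofFn w' = u ++ v ∧ List.ofFn w = v ++ u := by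
  -- d = d'
  have hdd : d = d' := by
    have := LinearEquiv.finrank_eq U.toLinearEquiv
    simpa using this
  subst hdd
  have hφ0 : φ ≠ 0 := by intro h; rw [h] at hφ; simp at hφ
  have hφ0' : φ' ≠ 0 := by intro h; rw [h] at hφ'; simp at hφ'
  set e0 : EuclideanSpace ℂ (Fin d) := EuclideanSpace.single ⟨0, hd⟩ 1 with he0
  have hUe0 : U e0 ≠ 0 := by
    intro h
    exact single_ne_zero' d ⟨0, hd⟩ (U.injective (by rw [h, map_zero]))
  -- φ = φ'
  have hphi : φ = φ' := by
    set f : EuclideanSpace ℂ (Fin d) →ₗ[ℂ] EuclideanSpace ℂ (Fin d) :=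
      Matrix.toEuclideanLin (Aw d w * Dmat d φ) + Matrix.toEuclideanLin (Bw d w * Dmat d φ)
      with hfdef
    set f' : EuclideanSpace ℂ (Fin d) →ₗ[ℂ] EuclideanSpace ℂ (Fin d) :=
      Matrix.toEuclideanLin (Aw d w' * Dmat d φ') + Matrix.toEuclideanLin (Bw d w' * Dmat d φ')
      with hfdef'
    have hf : ∀ (v : Fin d → Bool) (ψ : ℂ) (j : Fin d),
        (Matrix.toEuclideanLin (Aw d v * Dmat d ψ) + Matrix.toEuclideanLin (Bw d v * Dmat d ψ))
          (EuclideanSpace.single j 1) =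
        (if (j : ℕ) = d - 1 then ψ else 1) •
          EuclideanSpace.single (⟨((j : ℕ) + 1) % d, Nat.mod_lt _ hd⟩ : Fin d) 1 := by
      intro v ψ j
      have hA := step d hd v ψ false j
      have hB := step d hd v ψ true j
      rw [show (if (false : Bool) then Bw d v else Aw d v) = Aw d v from rfl] at hA
      rw [show (if (true : Bool) then Bw d v else Aw d v) = Bw d v from rfl] at hB
      show Matrix.toEuclideanLin (Aw d v * Dmat d ψ) (EuclideanSpace.single j 1) +
        Matrix.toEuclideanLin (Bw d v * Dmat d ψ) (EuclideanSpace.single j 1) = _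
      rcases hv : v j with _ | _
      · rw [hA, hB]; simp only [hv]; simp
      · rw [hA, hB]; simp only [hv]; simp
    have hint : ∀ (n : ℕ) (x : EuclideanSpace ℂ (Fin d)), U (f^[n] x) = f'^[n] (U x) := by
      intro n
      induction n with
      | zero => intro x; rfl
      | succ n ihn =>
        intro x
        rw [Function.iterate_succ_apply, ihn, Function.iterate_succ_apply]
        congr 1
        show U (Matrix.toEuclideanLin (Aw d w * Dmat d φ) x +
            Matrix.toEuclideanLin (Bw d w * Dmat d φ) x) = _
        rw [map_add, hUA, hUB]
        rfl
    have hfd : f^[d] e0 = φ • e0 := cycle_pow d hd f φ (hf w φ) ⟨0, hd⟩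
    have hfd' : ∀ y, f'^[d] y = φ' • y := by
      have hext : (f' ^ d : EuclideanSpace ℂ (Fin d) →ₗ[ℂ] EuclideanSpace ℂ (Fin d)) =
          φ' • LinearMap.id := by
        apply Module.Basis.ext (EuclideanSpace.basisFun (Fin d) ℂ).toBasis
        intro j
        have hb : (EuclideanSpace.basisFun (Fin d) ℂ).toBasis j = EuclideanSpace.single j 1 := by
          simp [EuclideanSpace.basisFun_apply]
        rw [hb, Module.End.pow_apply]
        rw [cycle_pow d hd f' φ' (hf w' φ') j]
        rfl
      intro y
      have hy := congrArg
        (fun g : EuclideanSpace ℂ (Fin d) →ₗ[ℂ] EuclideanSpace ℂ (Fin d) => g y) hext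
      simpa [Module.End.pow_apply] using hy
    have hkey : φ • U e0 = φ' • U e0 := by
      rw [← map_smul U φ e0, ← hfd, hint, hfd']
    have hsub : (φ - φ') • U e0 = 0 := by rw [sub_smul, hkey, sub_self]
    rcases smul_eq_zero.mp hsub with h | h
    · exact sub_eq_zero.mp h
    · exact absurd h hUe0
  refine ⟨rfl, hphi, ?_⟩
  -- cyclic permutation
  set l : List Bool := List.ofFn w with hl
  have hlen : l.length = d := by simp [hl]
  have hmatch0 : ∀ (t : ℕ) (ht : t < l.length),
      w ⟨(((⟨0, hd⟩ : Fin d) : ℕ) + t) % d, Nat.mod_lt _ hd⟩ = l.get ⟨t, ht⟩ := by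
    intro t ht
    have ht' : t < d := hlen ▸ ht
    have hg : l.get ⟨t, ht⟩ = w ⟨t, ht'⟩ := by
      simp [hl, List.get_ofFn]
    rw [hg]
    congr 1
    apply Fin.ext
    show (0 + t) % d = t
    rw [Nat.zero_add, Nat.mod_eq_of_lt ht']
  obtain ⟨c, hc, hEq⟩ := matAct_single_of_match d hd w φ hφ0 l ⟨0, hd⟩ hmatch0
  rw [← he0] at hEq
  have hne : matAct (Aw d w' * Dmat d φ') (Bw d w' * Dmat d φ') l (U e0) ≠ 0 := by
    have hint : ∀ (m : List Bool) (x : EuclideanSpace ℂ (Fin d)),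
        U (matAct (Aw d w * Dmat d φ) (Bw d w * Dmat d φ) m x) =
          matAct (Aw d w' * Dmat d φ') (Bw d w' * Dmat d φ') m (U x) := by
      intro m
      induction m with
      | nil => intro x; rfl
      | cons b rest ihm =>
        intro x
        show U (matAct _ _ rest _) = matAct _ _ rest _
        rw [ihm]
        cases b
        · exact congrArg (matAct _ _ rest) (hUA x)
        · exact congrArg (matAct _ _ rest) (hUB x)
    rw [← hint l e0, hEq]
    intro h
    have hz : (c • EuclideanSpace.single
        (⟨(((⟨0, hd⟩ : Fin d) : ℕ) + l.length) % d, Nat.mod_lt _ hd⟩ : Fin d) (1:ℂ)) = 0 :=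
      U.injective (by rw [h, map_zero])
    rcases smul_eq_zero.mp hz with h' | h'
    · exact hc h'
    · exact single_ne_zero' d _ h'
  -- decompose U e0 over the basis
  have hdec := (Module.Basis.sum_repr ((EuclideanSpace.basisFun (Fin d) ℂ).toBasis) (U e0)).symm
  have hex : ∃ j : Fin d,
      matAct (Aw d w' * Dmat d φ') (Bw d w' * Dmat d φ') l (EuclideanSpace.single j 1) ≠ 0 := by
    by_contra hall
    push_neg at hall
    apply hne
    rw [hdec, matAct_eq_matActL, map_sum]
    apply Finset.sum_eq_zero
    intro j _
    have hbj : ((EuclideanSpace.basisFun (Fin d) ℂ).toBasis j) = EuclideanSpace.single j (1:ℂ) := by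
      simp [EuclideanSpace.basisFun_apply]
    rw [map_smul, ← matAct_eq_matActL, hbj, hall j, smul_zero]
  obtain ⟨j, hj⟩ := hex
  have hmatch := match_of_matAct_single_ne d hd w' φ' l j hj
  -- conclude the rotation
  refine ⟨(List.ofFn w').take (j : ℕ), (List.ofFn w').drop (j : ℕ), ?_, ?_⟩
  · exact (List.take_append_drop _ _).symm
  · have hlen' : (List.ofFn w').length = d := by simp
    have hjle : (j : ℕ) ≤ (List.ofFn w').length := by rw [hlen']; exact j.isLt.le
    rw [← List.rotate_eq_drop_append_take hjle]
    apply List.ext_get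
    · simp only [List.length_rotate, List.length_ofFn]
      exact hlen
    · intro t h1 h2
      have ht : t < d := hlen ▸ h1
      rw [List.get_rotate]
      have htl : t < l.length := hlen ▸ ht
      have hmt := hmatch t htl
      have hget : l.get ⟨t, htl⟩ = w ⟨t, ht⟩ := by simp [hl, List.get_ofFn]
      rw [hget] at hmt
      have hLHS : (List.ofFn w).get ⟨t, h1⟩ = w ⟨t, ht⟩ := by simp [List.get_ofFn]
      rw [hLHS, ← hmt]
      rw [List.get_ofFn]
      congr 1
      apply Fin.ext
      simp [Nat.add_comm]
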